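/- Combining the estimator error bound and the similarity-transform bound: if ε > 0 and E[‖K̂−K‖_F] ≤ (√Δ/√T)·√(E[Tr(Σ̂₀)]·E[‖Σ̂₀⁻¹‖_F²]), then with probability at least 1−ε, ‖P̂ − P‖_F ≤ (√Δ ‖Λ‖₂‖Λ⁻¹‖₂/(ε√T))·√(E[Tr(Σ̂₀)]·E[‖Σ̂₀⁻¹‖_F²]), where P̂ = Λ⁻¹K̂ᵀΛ and P = Λ⁻¹KᵀΛ. -/

import Mathlib

open MeasureTheory Matrix

/-- The Frobenius norm of a real square matrix. -/
noncomputable def frobNorm {N : ℕ} (M : Matrix (Fin N) (Fin N) ℝ) : ℝ :=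
  Real.sqrt (∑ i, ∑ j, (M i j) ^ 2)

/-- The spectral (operator) norm of a real square matrix. -/
noncomputable def specNorm {N : ℕ} (M : Matrix (Fin N) (Fin N) ℝ) : ℝ :=
  ‖(Matrix.toEuclideanCLM (𝕜 := ℝ) M : EuclideanSpace ℝ (Fin N) →L[ℝ] EuclideanSpace ℝ (Fin N))‖

lemma frobNorm_nonneg {N : ℕ} (M : Matrix (Fin N) (Fin N) ℝ) : 0 ≤ frobNorm M :=
  Real.sqrt_nonneg _

lemma frobNorm_sq {N : ℕ} (M : Matrix (Fin N) (Fin N) ℝ) :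
    frobNorm M ^ 2 = ∑ i, ∑ j, (M i j) ^ 2 := by
  apply Real.sq_sqrt
  positivity

lemma specNorm_nonneg {N : ℕ} (M : Matrix (Fin N) (Fin N) ℝ) : 0 ≤ specNorm M :=
  norm_nonneg _

lemma frobNorm_transpose {N : ℕ} (M : Matrix (Fin N) (Fin N) ℝ) :
    frobNorm M.transpose = frobNorm M := by
  unfold frobNorm
  rw [Finset.sum_comm]
  rfl

lemma frobNorm_mul_le {N : ℕ} (A M : Matrix (Fin N) (Fin N) ℝ) :
    frobNorm (A * M) ≤ specNorm A * frobNorm M := by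
  have h1 : frobNorm (A * M) ^ 2 ≤ (specNorm A * frobNorm M) ^ 2 := by
    rw [frobNorm_sq, mul_pow, frobNorm_sq]
    rw [Finset.sum_comm]
    rw [Finset.sum_comm (s := Finset.univ) (t := Finset.univ) (f := fun i j => (M i j) ^ 2)]
    rw [Finset.mul_sum]
    apply Finset.sum_le_sum
    intro j _
    -- column j
    set v : EuclideanSpace ℝ (Fin N) := (WithLp.equiv 2 _).symm (fun i => M i j) with hv
    have hnv : ‖v‖ ^ 2 = ∑ i, (M i j) ^ 2 := by
      rw [EuclideanSpace.norm_eq, Real.sq_sqrt (by positivity)]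
      simp [v, sq_abs]
    have hAv : ∀ i, (toEuclideanCLM (𝕜 := ℝ) A v) i = (A * M) i j := by
      intro i
      rw [hv, WithLp.equiv_symm_apply, toEuclideanCLM_toLp]
      simp [Matrix.mul_apply, Matrix.mulVec, dotProduct]
    have hAnv : ‖toEuclideanCLM (𝕜 := ℝ) A v‖ ^ 2 = ∑ i, ((A * M) i j) ^ 2 := by
      rw [EuclideanSpace.norm_eq, Real.sq_sqrt (by positivity)]
      simp only [Real.norm_eq_abs, sq_abs, hAv]
    calc ∑ i, ((A * M) i j) ^ 2 = ‖toEuclideanCLM (𝕜 := ℝ) A v‖ ^ 2 := hAnv.symm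
      _ ≤ (specNorm A * ‖v‖) ^ 2 := by
          apply pow_le_pow_left₀ (norm_nonneg _)
          exact (toEuclideanCLM (𝕜 := ℝ) A).le_opNorm v
      _ = specNorm A ^ 2 * ∑ i, (M i j) ^ 2 := by rw [mul_pow, hnv]
  nlinarith [frobNorm_nonneg (A * M), specNorm_nonneg A, frobNorm_nonneg M,
    mul_nonneg (specNorm_nonneg A) (frobNorm_nonneg M)]

/-- Sample complexity for the Perron–Frobenius matrix: if
`E[‖K̂-K‖_F] ≤ (√Δ/√T)·√(E[Tr Σ̂₀]·E[‖Σ̂₀⁻¹‖_F²])` and `P̂ = Λ⁻¹K̂ᵀΛ`, `P = Λ⁻¹KᵀΛ` with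
`Λ` symmetric positive definite, then with probability at least `1-ε`,
`‖P̂-P‖_F ≤ (√Δ‖Λ‖₂‖Λ⁻¹‖₂/(ε√T))·√(E[Tr Σ̂₀]·E[‖Σ̂₀⁻¹‖_F²])`. -/
theorem sample_complexity_pf {N : ℕ} {T : ℕ} (hT : 0 < T) {Δ : ℝ} (hΔ : 0 ≤ Δ)
    {ε : ℝ} (hε : ε ∈ Set.Ioo (0 : ℝ) 1)
    {Ω : Type*} [MeasurableSpace Ω] (μ : Measure Ω) [IsProbabilityMeasure μ]
    (Khat S0 : Ω → Matrix (Fin N) (Fin N) ℝ) (K Λ : Matrix (Fin N) (Fin N) ℝ)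
    (hΛ : Λ.PosDef) (hΛsymm : Λ.IsSymm)
    (Phat : Ω → Matrix (Fin N) (Fin N) ℝ) (P : Matrix (Fin N) (Fin N) ℝ)
    (hPhat : ∀ ω, Phat ω = Λ⁻¹ * (Khat ω).transpose * Λ)
    (hP : P = Λ⁻¹ * K.transpose * Λ)
    (hmeas : Measurable fun ω => frobNorm (Khat ω - K))
    (hint : Integrable (fun ω => frobNorm (Khat ω - K)) μ)
    (hE : ∫ ω, frobNorm (Khat ω - K) ∂μ ≤
      (Real.sqrt Δ / Real.sqrt T) *
        Real.sqrt ((∫ ω, (S0 ω).trace ∂μ) * ∫ ω, frobNorm ((S0 ω)⁻¹) ^ 2 ∂μ)) :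
    1 - ENNReal.ofReal ε ≤
      μ {ω | frobNorm (Phat ω - P) ≤
        (Real.sqrt Δ * specNorm Λ * specNorm Λ⁻¹ / (ε * Real.sqrt T)) *
          Real.sqrt ((∫ ω, (S0 ω).trace ∂μ) * ∫ ω, frobNorm ((S0 ω)⁻¹) ^ 2 ∂μ)} := by
  obtain ⟨hε0, hε1⟩ := hε
  set S : ℝ := Real.sqrt ((∫ ω, (S0 ω).trace ∂μ) * ∫ ω, frobNorm ((S0 ω)⁻¹) ^ 2 ∂μ) with hS
  set g : Ω → ℝ := fun ω => frobNorm (Khat ω - K) with hg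
  set B : ℝ := (Real.sqrt Δ / Real.sqrt T) * S with hBdef
  have hB : 0 ≤ B := by positivity
  set C : ℝ := specNorm Λ * specNorm Λ⁻¹ with hCdef
  have hC : 0 ≤ C := mul_nonneg (specNorm_nonneg _) (specNorm_nonneg _)
  -- RHS equals C * B / ε
  have hRHS : (Real.sqrt Δ * specNorm Λ * specNorm Λ⁻¹ / (ε * Real.sqrt T)) * S
      = C * (B / ε) := by
    rw [hCdef, hBdef]; field_simp
  -- deterministic bound
  have hdet : ∀ ω, frobNorm (Phat ω - P) ≤ C * g ω := by
    intro ω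
    have hdiff : Phat ω - P = Λ⁻¹ * ((Λ * (Khat ω - K)).transpose) := by
      rw [hPhat, hP]
      rw [Matrix.transpose_mul, Matrix.transpose_sub, hΛsymm.eq]
      simp [Matrix.mul_sub, Matrix.sub_mul, mul_assoc]
    calc frobNorm (Phat ω - P)
        ≤ specNorm Λ⁻¹ * frobNorm ((Λ * (Khat ω - K)).transpose) := by
          rw [hdiff]; exact frobNorm_mul_le _ _
      _ = specNorm Λ⁻¹ * frobNorm (Λ * (Khat ω - K)) := by rw [frobNorm_transpose]
      _ ≤ specNorm Λ⁻¹ * (specNorm Λ * frobNorm (Khat ω - K)) := by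
          exact mul_le_mul_of_nonneg_left (frobNorm_mul_le _ _) (specNorm_nonneg _)
      _ = C * g ω := by rw [hCdef, hg]; ring
  -- the sub-event
  have hsub : {ω | g ω ≤ B / ε} ⊆ {ω | frobNorm (Phat ω - P) ≤
      (Real.sqrt Δ * specNorm Λ * specNorm Λ⁻¹ / (ε * Real.sqrt T)) * S} := by
    intro ω hω
    simp only [Set.mem_setOf_eq] at hω ⊢
    rw [hRHS]
    exact (hdet ω).trans (mul_le_mul_of_nonneg_left hω hC)
  refine le_trans ?_ (measure_mono hsub)
  -- Markov
  set E : Set Ω := {ω | g ω ≤ B / ε} with hEdef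
  have hEmeas : MeasurableSet E := hmeas measurableSet_Iic
  have hcompl : μ Eᶜ ≤ ENNReal.ofReal ε := by
    have hEc : Eᶜ = {ω | B / ε < g ω} := by
      ext ω; simp [hEdef, not_le]
    rcases eq_or_lt_of_le hB with hB0 | hB0
    · -- B = 0 : g = 0 a.e.
      have hg0 : ∀ᵐ ω ∂μ, g ω = 0 := by
        have hint0 : ∫ ω, g ω ∂μ ≤ 0 := by rw [← hB0] at hE; exact hE
        have h1 : ∫ ω, g ω ∂μ = 0 :=
          le_antisymm hint0 (integral_nonneg fun ω => frobNorm_nonneg _)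
        have := (integral_eq_zero_iff_of_nonneg (fun ω => frobNorm_nonneg _) hint).mp h1
        filter_upwards [this] with ω hω using hω
      have : μ Eᶜ = 0 := by
        refine measure_mono_null ?_ (ae_iff.mp hg0)
        rw [hEc]
        intro ω hω
        simp only [Set.mem_setOf_eq] at hω ⊢
        have : (0:ℝ) < g ω := lt_of_le_of_lt (by rw [← hB0]; positivity) hω
        exact ne_of_gt this
      simp [this]
    · -- B > 0
      have hc : 0 < B / ε := div_pos hB0 hε0
      have hmarkov := mul_meas_ge_le_integral_of_nonneg
        (ae_of_all μ fun ω => frobNorm_nonneg (Khat ω - K)) hint (B / ε)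
      have hle : (B / ε) * (μ {ω | B / ε ≤ g ω}).toReal ≤ B := le_trans hmarkov hE
      have htoReal : (μ Eᶜ).toReal ≤ ε := by
        have hmono : μ Eᶜ ≤ μ {ω | B / ε ≤ g ω} := by
          rw [hEc]; exact measure_mono (Set.setOf_subset_setOf.mpr fun ω hω => le_of_lt hω)
        have h2 : (μ Eᶜ).toReal ≤ (μ {ω | B / ε ≤ g ω}).toReal :=
          ENNReal.toReal_mono (measure_ne_top μ _) hmono
        have h3 : (μ {ω | B / ε ≤ g ω}).toReal ≤ B / (B / ε) :=
          (le_div_iff₀' hc).mpr hle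
        have h4 : B / (B / ε) = ε := by field_simp
        linarith
      exact (ENNReal.le_ofReal_iff_toReal_le (measure_ne_top μ _) hε0.le).mpr htoReal
  rw [tsub_le_iff_right]
  calc (1 : ENNReal) = μ E + μ Eᶜ := by
        rw [measure_add_measure_compl hEmeas, measure_univ]
    _ ≤ μ E + ENNReal.ofReal ε := add_le_add_right hcompl _
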